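/- arXiv:1705.03211 — 7 statements merged into one kernel-verified Lean document; each statement's English description precedes it below -/
import Mathlib

section
/- In every Mīmāṃsā model, the axiom schema (1): (□(φ→ψ) ∧ O(φ/θ)) → O(ψ/θ) is valid. -/
/-- Formulas of bMDL: atoms, ⊥, →, □, and dyadic O(·/·). -/
inductive Fm (V : Type) : Type
  | var : V → Fm V
  | bot : Fm V
  | imp : Fm V → Fm V → Fm V
  | box : Fm V → Fm V
  | ob  : Fm V → Fm V → Fm V

namespace Fm
variable {V : Type}
def neg (φ : Fm V) : Fm V := φ.imp .bot
def top : Fm V := (Fm.bot (V := V)).neg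
def and (φ ψ : Fm V) : Fm V := (φ.imp ψ.neg).neg
def or  (φ ψ : Fm V) : Fm V := φ.neg.imp ψ
def iff (φ ψ : Fm V) : Fm V := (φ.imp ψ).and (ψ.imp φ)
end Fm

/-- A Mīmāṃsā model: an m-frame (nonempty W, reflexive transitive R,
neighbourhood map η satisfying conditions (ii)–(v)) with a valuation. -/
structure MModel (V W : Type) where
  ne : Nonempty W
  R : W → W → Prop
  refl : ∀ w, R w w
  trans : ∀ {a b c}, R a b → R b c → R a c
  η : W → Set (Set W × Set W)
  η_sub : ∀ w X Y, (X, Y) ∈ η w → X ⊆ {v | R w v} ∧ Y ⊆ {v | R w v}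
  η_mono : ∀ w X Y Z, (X, Z) ∈ η w → X ⊆ Y → Y ⊆ {v | R w v} → (Y, Z) ∈ η w
  η_nonempty : ∀ w X, ((∅ : Set W), X) ∉ η w
  η_noconflict : ∀ w X Y, (X, Y) ∈ η w → (Xᶜ ∩ {v | R w v}, Y) ∉ η w
  σ : W → Set V

/-- Truth of a formula at a world. -/
def MModel.sat {V W : Type} (M : MModel V W) : W → Fm V → Prop
  | w, .var p => p ∈ M.σ w
  | _, .bot => False
  | w, .imp φ ψ => M.sat w φ → M.sat w ψ
  | w, .box φ => ∀ v, M.R w v → M.sat v φ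
  | w, .ob φ ψ =>
      ({v | M.sat v φ} ∩ {v | M.R w v}, {v | M.sat v ψ} ∩ {v | M.R w v}) ∈ M.η w

/-- Validity in a model: truth at every world. -/
def MModel.valid {V W : Type} (M : MModel V W) (φ : Fm V) : Prop :=
  ∀ w, M.sat w φ

/-- Axiom (1): (□(φ→ψ) ∧ O(φ/θ)) → O(ψ/θ) is valid in every m-model. -/
theorem stmt1 {V W : Type} (M : MModel V W) (φ ψ θ : Fm V) :
    M.valid (((Fm.box (φ.imp ψ)).and (Fm.ob φ θ)).imp (Fm.ob ψ θ)) := by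
  intro w h
  simp only [Fm.and, Fm.neg, MModel.sat] at h ⊢
  by_contra hc
  apply h
  intro hbox hob
  apply hc
  refine M.η_mono w _ _ _ hob ?_ ?_
  · rintro v ⟨hv, hr⟩; exact ⟨hbox v hr hv, hr⟩
  · rintro v ⟨_, hr⟩; exact hr
end

section
/- In every Mīmāṃsā model, the axiom schema (2): □(ψ→¬φ) → ¬(O(φ/θ) ∧ O(ψ/θ)) is valid. -/
/-- Axiom (2): □(ψ→¬φ) → ¬(O(φ/θ) ∧ O(ψ/θ)) is valid in every m-model. -/
theorem stmt2 {V W : Type} (M : MModel V W) (φ ψ θ : Fm V) :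
    M.valid ((Fm.box (ψ.imp φ.neg)).imp ((Fm.ob φ θ).and (Fm.ob ψ θ)).neg) := by
  intro w hbox hconj
  have hpair : M.sat w (Fm.ob φ θ) ∧ M.sat w (Fm.ob ψ θ) := by
    by_contra h
    push_neg at h
    exact hconj (fun hφ hψ => (h hφ) hψ)
  obtain ⟨hφθ, hψθ⟩ := hpair
  simp only [MModel.sat] at hφθ hψθ hbox
  have hmono := M.η_mono w _ (({v | M.sat v ψ} ∩ {v | M.R w v})ᶜ ∩ {v | M.R w v}) _
    hφθ (fun v ⟨hvφ, hvR⟩ => ⟨fun ⟨hvψ, _⟩ => hbox v hvR hvψ hvφ, hvR⟩)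
    (fun v hv => hv.2)
  exact M.η_noconflict w _ _ hψθ hmono
end

section
/- In every Mīmāṃsā model, the axiom schema (3): (□((ψ→θ)∧(θ→ψ)) ∧ O(φ/ψ)) → O(φ/θ) is valid. -/
private lemma aux_conj {P Q : Prop} (h : (P → Q → False) → False) : P ∧ Q := by
  by_contra hc
  push_neg at hc
  exact h fun p q => hc p q

/-- Axiom (3): (□((ψ→θ)∧(θ→ψ)) ∧ O(φ/ψ)) → O(φ/θ) is valid in every m-model. -/
theorem stmt3 {V W : Type} (M : MModel V W) (φ ψ θ : Fm V) :
    M.valid (((Fm.box ((ψ.imp θ).and (θ.imp ψ))).and (Fm.ob φ ψ)).imp (Fm.ob φ θ)) := by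
  intro w h
  simp only [Fm.and, Fm.neg, MModel.sat] at h ⊢
  obtain ⟨hbox, hob⟩ := aux_conj h
  have heq : ({v | M.sat v ψ} ∩ {v | M.R w v}) = ({v | M.sat v θ} ∩ {v | M.R w v}) := by
    ext v
    constructor <;> rintro ⟨hs, hr⟩ <;> refine ⟨?_, hr⟩
    · exact (aux_conj (hbox v hr)).1 hs
    · exact (aux_conj (hbox v hr)).2 hs
  rw [← heq]
  exact hob
end

section
/- There exists a Mīmāṃsā model and a world in it satisfying the formula □(he→hrm) ∧ □(sy→he) ∧ □O(¬hrm/⊤) ∧ □O(sy/de), where hrm, he, sy, de are distinct propositional variables. Consequently, the set {he→hrm, sy→he, O(¬hrm/⊤), O(sy/de)} is consistent over Mīmāṃsā semantics (its global assumption does not entail ⊥). -/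
lemma sat_and {V W : Type} (M : MModel V W) (w : W) (φ ψ : Fm V) :
    M.sat w (φ.and ψ) ↔ M.sat w φ ∧ M.sat w ψ := by
  simp only [Fm.and, Fm.neg, MModel.sat]; tauto

def simpleM : MModel (Fin 4) Bool where
  ne := ⟨true⟩
  R := fun _ _ => True
  refl := fun _ => trivial
  trans := fun _ _ => trivial
  η := fun _ => {p | (false ∈ p.1 ∧ p.2 = Set.univ) ∨ (true ∈ p.1 ∧ p.2 = {true})}
  η_sub := by intro w X Y _; constructor <;> intro v _ <;> trivial
  η_mono := by
    rintro w X Y Z (⟨h1, h2⟩ | ⟨h1, h2⟩) hXY _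
    · exact Or.inl ⟨hXY h1, h2⟩
    · exact Or.inr ⟨hXY h1, h2⟩
  η_nonempty := by rintro w X (⟨h, _⟩ | ⟨h, _⟩) <;> exact h
  η_noconflict := by
    rintro w X Y (⟨h1, h2⟩ | ⟨h1, h2⟩) (⟨g1, g2⟩ | ⟨g1, g2⟩)
    · exact g1.1 h1
    · rw [h2] at g2; have : (false : Bool) ∈ ({true} : Set Bool) := g2 ▸ Set.mem_univ false
      simp at this
    · rw [h2] at g2; have : (false : Bool) ∈ ({true} : Set Bool) := g2.symm ▸ Set.mem_univ false
      simp at this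
    · exact g1.1 h1
  σ := fun b => if b then Set.univ else ∅

lemma sat_obA : ∀ w, simpleM.sat w (Fm.ob (Fm.var 0).neg Fm.top) := by
  intro w
  show _ ∈ _
  left
  constructor
  · show simpleM.sat false ((Fm.var 0).neg) ∧ _
    constructor
    · intro h; simp [simpleM, MModel.sat] at h
    · simp [simpleM]
  · ext v; simp [simpleM, MModel.sat, Fm.top, Fm.neg]

lemma sat_obB : ∀ w, simpleM.sat w (Fm.ob (Fm.var 2) (Fm.var 3)) := by
  intro w
  show _ ∈ _
  right
  constructor
  · show simpleM.sat true (Fm.var 2) ∧ _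
    exact ⟨by simp [simpleM, MModel.sat], by simp [simpleM]⟩
  · ext v; cases v <;> simp [simpleM, MModel.sat]

/-- There is a Mīmāṃsā model and a world satisfying the boxed Śyena
assumptions (with distinct variables); moreover a model in which all four
Śyena assumptions are valid (so they do not semantically entail ⊥). -/
theorem stmt6 :
    ∃ (V W : Type) (M : MModel V W) (hrm he sy de : V),
      hrm ≠ he ∧ hrm ≠ sy ∧ hrm ≠ de ∧ he ≠ sy ∧ he ≠ de ∧ sy ≠ de ∧
      (∃ w : W, M.sat w
        ((((Fm.box ((Fm.var he).imp (Fm.var hrm))).and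
            (Fm.box ((Fm.var sy).imp (Fm.var he)))).and
          (Fm.box (Fm.ob (Fm.var hrm).neg Fm.top))).and
          (Fm.box (Fm.ob (Fm.var sy) (Fm.var de))))) ∧
      (M.valid ((Fm.var he).imp (Fm.var hrm)) ∧
       M.valid ((Fm.var sy).imp (Fm.var he)) ∧
       M.valid (Fm.ob (Fm.var hrm).neg Fm.top) ∧
       M.valid (Fm.ob (Fm.var sy) (Fm.var de)) ∧
       ¬ M.valid Fm.bot) := by
  refine ⟨Fin 4, Bool, simpleM, 0, 1, 2, 3, by decide, by decide, by decide,
    by decide, by decide, by decide, ⟨true, ?_⟩, ?_, ?_, ?_, ?_, ?_⟩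
  · rw [sat_and, sat_and, sat_and]
    refine ⟨⟨⟨?_, ?_⟩, ?_⟩, ?_⟩
    · intro v _ h; cases v <;> simp_all [simpleM, MModel.sat]
    · intro v _ h; cases v <;> simp_all [simpleM, MModel.sat]
    · intro v _; exact sat_obA v
    · intro v _; exact sat_obB v
  · intro w h; cases w <;> simp_all [simpleM, MModel.sat]
  · intro w h; cases w <;> simp_all [simpleM, MModel.sat]
  · exact sat_obA
  · exact sat_obB
  · intro h; exact h true
end

section
/- In any Mīmāṃsā model, if at world w both O(φ/θ) and O(ψ/θ) hold and every world accessible from w satisfying ψ falsifies φ, then there is a contradiction; formally, it is impossible that ([[φ]]∩R[w],[[θ]]∩R[w])∈η(w), ([[ψ]]∩R[w],[[θ]]∩R[w])∈η(w), and [[φ]]∩[[ψ]]∩R[w]=∅ all hold. -/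
/-- Conflicting obligations over the same condition with incompatible
contents are impossible: not all of O(φ/θ)∈η-form, O(ψ/θ)∈η-form and
[[φ]]∩[[ψ]]∩R[w]=∅ can hold. -/
theorem stmt8 {V W : Type} (M : MModel V W) (w : W) (φ ψ θ : Fm V) :
    ¬ (({v | M.sat v φ} ∩ {v | M.R w v}, {v | M.sat v θ} ∩ {v | M.R w v}) ∈ M.η w ∧
       ({v | M.sat v ψ} ∩ {v | M.R w v}, {v | M.sat v θ} ∩ {v | M.R w v}) ∈ M.η w ∧
       {v | M.sat v φ} ∩ {v | M.sat v ψ} ∩ {v | M.R w v} = ∅) := by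
  rintro ⟨h1, h2, h3⟩
  have hmono : (({v | M.sat v φ} ∩ {v | M.R w v})ᶜ ∩ {v | M.R w v}, {v | M.sat v θ} ∩ {v | M.R w v}) ∈ M.η w := by
    apply M.η_mono w ({v | M.sat v ψ} ∩ {v | M.R w v}) _ _ h2
    · intro x hx
      refine ⟨fun hφ => ?_, hx.2⟩
      have : x ∈ ({v | M.sat v φ} ∩ {v | M.sat v ψ} ∩ {v | M.R w v} : Set W) :=
        ⟨⟨hφ.1, hx.1⟩, hx.2⟩
      rw [h3] at this; exact this
    · exact Set.inter_subset_right
  exact M.η_noconflict w _ _ h1 hmono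
end

section
/- Monotonicity of the deontic operator is semantically valid: in any Mīmāṃsā model, if at world w every accessible world satisfying φ satisfies θ, every accessible world satisfies ψ↔χ, and O(φ/ψ) holds at w, then O(θ/χ) holds at w. (This is the semantic soundness of the rule Mon.) -/
/-- Semantic soundness of the rule Mon. -/
theorem stmt10 {V W : Type} (M : MModel V W) (w : W) (φ ψ θ χ : Fm V)
    (h1 : {v | M.sat v φ} ∩ {v | M.R w v} ⊆ {v | M.sat v θ} ∩ {v | M.R w v})
    (h2 : {v | M.sat v ψ} ∩ {v | M.R w v} = {v | M.sat v χ} ∩ {v | M.R w v})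
    (h3 : M.sat w (Fm.ob φ ψ)) :
    M.sat w (Fm.ob θ χ) := by
  simp only [MModel.sat] at h3 ⊢
  rw [← h2]
  exact M.η_mono w _ _ _ h3 (fun v hv => ⟨h1 hv |>.1, hv.2⟩) (fun v hv => hv.2)
end

section
/- The Hilbert system bMDL (S4 plus axiom schemata (1)–(3) for O) is consistent: ⊥ is not derivable in bMDL. -/
/-- The Hilbert system bMDL: classical propositional logic (over →,⊥),
S4 axioms K, T, 4 for □, deontic axioms (1)–(3), with modus ponens and
necessitation. -/
inductive Prov {V : Type} : Fm V → Prop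
  | pl1 (φ ψ : Fm V) : Prov (φ.imp (ψ.imp φ))
  | pl2 (φ ψ χ : Fm V) :
      Prov ((φ.imp (ψ.imp χ)).imp ((φ.imp ψ).imp (φ.imp χ)))
  | dne (φ : Fm V) : Prov (φ.neg.neg.imp φ)
  | axK (φ ψ : Fm V) :
      Prov ((Fm.box (φ.imp ψ)).imp ((Fm.box φ).imp (Fm.box ψ)))
  | axT (φ : Fm V) : Prov ((Fm.box φ).imp φ)
  | ax4 (φ : Fm V) : Prov ((Fm.box φ).imp (Fm.box (Fm.box φ)))
  | d1 (φ ψ θ : Fm V) :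
      Prov (((Fm.box (φ.imp ψ)).and (Fm.ob φ θ)).imp (Fm.ob ψ θ))
  | d2 (φ ψ θ : Fm V) :
      Prov ((Fm.box (ψ.imp φ.neg)).imp ((Fm.ob φ θ).and (Fm.ob ψ θ)).neg)
  | d3 (φ ψ θ : Fm V) :
      Prov (((Fm.box ((ψ.imp θ).and (θ.imp ψ))).and (Fm.ob φ ψ)).imp (Fm.ob φ θ))
  | mp {φ ψ : Fm V} : Prov (φ.imp ψ) → Prov φ → Prov ψ
  | nec {φ : Fm V} : Prov φ → Prov (Fm.box φ)

def trivM : MModel ℕ Unit where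
  ne := ⟨()⟩
  R := fun _ _ => True
  refl := fun _ => trivial
  trans := fun _ _ => trivial
  η := fun _ => ∅
  η_sub := fun _ _ _ h => h.elim
  η_mono := fun _ _ _ _ h => h.elim
  η_nonempty := fun _ _ h => h.elim
  η_noconflict := fun _ _ _ h => h.elim
  σ := fun _ => ∅

lemma sound (φ : Fm ℕ) (h : Prov φ) : trivM.valid φ := by
  induction h with
  | pl1 φ ψ => intro w a _; exact a
  | pl2 φ ψ χ => intro w a b c; exact a c (b c)
  | dne φ =>
      intro w a
      by_contra hc
      exact a (fun h => hc h) 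
  | axK φ ψ => intro w a b v hv; exact a v hv (b v hv)
  | axT φ => intro w a; exact a w trivial
  | ax4 φ => intro w a v _ u _; exact a u trivial
  | d1 φ ψ θ => intro w a; exact (a (fun _ hob => hob)).elim
  | d2 φ ψ θ => intro w _ a; exact a (fun h1 _ => h1)
  | d3 φ ψ θ => intro w a; exact (a (fun _ hob => hob)).elim
  | mp h1 h2 ih1 ih2 => intro w; exact ih1 w (ih2 w)
  | nec h ih => intro w v _; exact ih v

/-- The Hilbert system bMDL is consistent: ⊥ is not derivable. -/
theorem stmt11 : ¬ Prov (Fm.bot (V := ℕ)) := fun h => sound _ h ()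
end
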